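/- Let K₁ > 0 and K₂ be real constants with |K₂| < K₁. Suppose x, u : ℝ → ℝ are differentiable, x(t) > 0 for all t ≥ 0, and they satisfy ẋ(t) = (1 − x(t)) x(t) − x(t) u(t) and u̇(t) = K₁(x(t) − 1) − K₂ for all t ≥ 0. Then x(t) → K₂/K₁ + 1 and u(t) → −K₂/K₁ as t → ∞; in particular the normalized resource level converges to the strictly positive value K₂/K₁ + 1, so the network continuously consumes the resource without driving it to zero. -/

import Mathlib

set_option maxHeartbeats 1000000

open Filter Set

/-- If `f` has nonpositive derivative on `[a, ∞)` then it is antitone there. -/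
lemma antitoneOn_of_hasDerivAt_nonpos {f f' : ℝ → ℝ} {a : ℝ}
    (hf : ∀ t ≥ a, HasDerivAt f (f' t) t) (h : ∀ t ≥ a, f' t ≤ 0) :
    AntitoneOn f (Set.Ici a) := by
  apply antitoneOn_of_deriv_nonpos (convex_Ici a)
  · exact fun t ht => (hf t ht).continuousAt.continuousWithinAt
  · intro t ht
    rw [interior_Ici] at ht
    exact ((hf t ht.le).differentiableAt).differentiableWithinAt
  · intro t ht
    rw [interior_Ici] at ht
    rw [(hf t ht.le).deriv]
    exact h t ht.le

/-- The normalized resource level converges to the strictly positive value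
`K₂/K₁ + 1` and the aggregate consumption converges to `-(K₂/K₁)`. -/
theorem resource_converges_positive (K₁ K₂ : ℝ) (hK₁ : 0 < K₁)
    (hK₂ : |K₂| < K₁) (x u : ℝ → ℝ)
    (hx_pos : ∀ t ≥ (0 : ℝ), 0 < x t)
    (hx : ∀ t ≥ (0 : ℝ), HasDerivAt x ((1 - x t) * x t - x t * u t) t)
    (hu : ∀ t ≥ (0 : ℝ), HasDerivAt u (K₁ * (x t - 1) - K₂) t) :
    Tendsto x atTop (nhds (K₂ / K₁ + 1)) ∧
      Tendsto u atTop (nhds (-(K₂ / K₁))) ∧ 0 < K₂ / K₁ + 1 := by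
  have habs := abs_lt.1 hK₂
  obtain ⟨xs, hxs_def⟩ : ∃ y : ℝ, y = K₂ / K₁ + 1 := ⟨_, rfl⟩
  obtain ⟨us, hus_def⟩ : ∃ y : ℝ, y = -(K₂ / K₁) := ⟨_, rfl⟩
  rw [← hxs_def, ← hus_def]
  have hxs : 0 < xs := by
    have : -1 < K₂ / K₁ := by
      rw [lt_div_iff₀ hK₁]; linarith [habs.1]
    rw [hxs_def]; linarith
  have hus_eq : us = 1 - xs := by rw [hus_def, hxs_def]; ring
  have hK2 : K₂ = K₁ * (xs - 1) := by
    rw [hxs_def]; field_simp; ring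
  -- the Lyapunov function
  obtain ⟨φ, hφ_def⟩ : ∃ f : ℝ → ℝ, f = fun y => y - xs * Real.log y := ⟨_, rfl⟩
  obtain ⟨V, hV_def⟩ : ∃ f : ℝ → ℝ,
      f = fun t => K₁ * φ (x t) + (u t - us) ^ 2 / 2 := ⟨_, rfl⟩
  have hφt : ∀ y : ℝ, φ y = y - xs * Real.log y := fun y => by rw [hφ_def]
  have hVt : ∀ t : ℝ, V t = K₁ * φ (x t) + (u t - us) ^ 2 / 2 := fun t => by rw [hV_def]
  -- derivative of V
  have hVd : ∀ t ≥ (0 : ℝ), HasDerivAt V (-(K₁ * (x t - xs) ^ 2)) t := by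
    intro t ht
    have hxt := hx_pos t ht
    have h1 : HasDerivAt (fun s => φ (x s))
        ((1 - xs / x t) * ((1 - x t) * x t - x t * u t)) t := by
      have hlog : HasDerivAt (fun s => Real.log (x s))
          (((1 - x t) * x t - x t * u t) / x t) t := by
        simpa [div_eq_inv_mul, Function.comp_def] using (Real.hasDerivAt_log hxt.ne').comp t (hx t ht)
      have h := ((hx t ht).sub (hlog.const_mul xs))
      rw [hφ_def]
      refine h.congr_deriv ?_
      field_simp
    have h2 : HasDerivAt (fun s => (u s - us) ^ 2 / 2)
        ((u t - us) * (K₁ * (x t - 1) - K₂)) t := by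
      have h := (((hu t ht).sub_const us).pow 2).div_const 2
      refine h.congr_deriv ?_
      ring
    have h := (h1.const_mul K₁).add h2
    rw [hV_def]
    refine h.congr_deriv ?_
    rw [hK2, hus_eq]
    field_simp
    ring
  -- V is antitone on [0, ∞)
  have hV_anti : AntitoneOn V (Set.Ici 0) :=
    antitoneOn_of_hasDerivAt_nonpos hVd (fun t ht => by nlinarith [sq_nonneg (x t - xs)])
  have hV0 : ∀ t ≥ (0 : ℝ), V t ≤ V 0 := fun t ht => hV_anti self_mem_Ici ht ht
  -- φ has a global minimum at xs
  have hφmin : ∀ y : ℝ, 0 < y → φ xs ≤ φ y := by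
    intro y hy
    have h1 : Real.log (y / xs) ≤ y / xs - 1 := Real.log_le_sub_one_of_pos (div_pos hy hxs)
    rw [Real.log_div hy.ne' hxs.ne'] at h1
    have h2 : xs * Real.log y - xs * Real.log xs ≤ y - xs := by
      have e : xs * (y / xs - 1) = y - xs := by field_simp
      nlinarith [mul_le_mul_of_nonneg_left h1 hxs.le]
    rw [hφt y, hφt xs]
    linarith
  -- bounds
  obtain ⟨B, hB_def⟩ : ∃ b : ℝ, b = V 0 / K₁ := ⟨_, rfl⟩
  have hφB : ∀ t ≥ (0 : ℝ), φ (x t) ≤ B := by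
    intro t ht
    have h1 : K₁ * φ (x t) + (u t - us) ^ 2 / 2 ≤ V 0 := (hVt t) ▸ hV0 t ht
    have h2 : 0 ≤ (u t - us) ^ 2 / 2 := by positivity
    rw [hB_def, le_div_iff₀ hK₁]
    nlinarith
  obtain ⟨C2, hC2_def⟩ : ∃ c : ℝ, c = 2 * (V 0 - K₁ * φ xs) := ⟨_, rfl⟩
  have hC2 : ∀ t ≥ (0 : ℝ), (u t - us) ^ 2 ≤ C2 := by
    intro t ht
    have h1 : K₁ * φ (x t) + (u t - us) ^ 2 / 2 ≤ V 0 := (hVt t) ▸ hV0 t ht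
    have h2 := mul_le_mul_of_nonneg_left (hφmin (x t) (hx_pos t ht)) hK₁.le
    rw [hC2_def]
    linarith
  have hC2nn : 0 ≤ C2 := le_trans (sq_nonneg _) (hC2 0 le_rfl)
  obtain ⟨Cu, hCu_def⟩ : ∃ c : ℝ, c = Real.sqrt C2 := ⟨_, rfl⟩
  have hCunn : 0 ≤ Cu := hCu_def ▸ Real.sqrt_nonneg _
  have hCu : ∀ t ≥ (0 : ℝ), |u t - us| ≤ Cu := by
    intro t ht
    have h1 := hC2 t ht
    have h2 : Cu ^ 2 = C2 := by rw [hCu_def]; exact Real.sq_sqrt hC2nn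
    nlinarith [sq_abs (u t - us), abs_nonneg (u t - us)]
  -- lower bound on x
  obtain ⟨m, hm_def⟩ : ∃ c : ℝ, c = Real.exp (-(B / xs)) := ⟨_, rfl⟩
  have hmpos : 0 < m := hm_def ▸ Real.exp_pos _
  have hm : ∀ t ≥ (0 : ℝ), m ≤ x t := by
    intro t ht
    have h1 := (hφt (x t)) ▸ hφB t ht
    have hxt := hx_pos t ht
    have h2 : -(B / xs) ≤ Real.log (x t) := by
      rw [← neg_div, div_le_iff₀ hxs]
      nlinarith
    calc m = Real.exp (-(B / xs)) := hm_def
      _ ≤ Real.exp (Real.log (x t)) := Real.exp_le_exp.2 h2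
      _ = x t := Real.exp_log hxt
  -- upper bound on x
  obtain ⟨M, hM_def⟩ : ∃ c : ℝ, c = 2 * B - 2 * xs + 2 * xs * Real.log (2 * xs) := ⟨_, rfl⟩
  have hM : ∀ t ≥ (0 : ℝ), x t ≤ M := by
    intro t ht
    have hxt := hx_pos t ht
    have h1 := (hφt (x t)) ▸ hφB t ht
    have h2 : Real.log (x t / (2 * xs)) ≤ x t / (2 * xs) - 1 :=
      Real.log_le_sub_one_of_pos (div_pos hxt (by linarith))
    rw [Real.log_div hxt.ne' (by positivity : (2:ℝ) * xs ≠ 0)] at h2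
    have h3 : xs * Real.log (x t) - xs * Real.log (2 * xs) ≤ x t / 2 - xs := by
      have e : xs * (x t / (2 * xs) - 1) = x t / 2 - xs := by field_simp
      nlinarith [mul_le_mul_of_nonneg_left h2 hxs.le]
    rw [hM_def]
    linarith
  have hMpos : 0 < M := lt_of_lt_of_le (hx_pos 0 le_rfl) (hM 0 le_rfl)
  -- bound on the derivative of x
  obtain ⟨D, hD_def⟩ : ∃ c : ℝ, c = M * (1 + M + |us| + Cu) + 1 := ⟨_, rfl⟩
  have hDpos : 0 < D := by
    rw [hD_def]
    nlinarith [abs_nonneg us, hMpos, hCunn]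
  have hD : ∀ t ≥ (0 : ℝ), |(1 - x t) * x t - x t * u t| ≤ D := by
    intro t ht
    have h1 : (1 - x t) * x t - x t * u t = x t * (1 - x t - u t) := by ring
    rw [h1, abs_mul, abs_of_pos (hx_pos t ht)]
    have h2 : |1 - x t - u t| ≤ 1 + M + |us| + Cu := by
      have h5 := hCu t ht
      have h3 : |u t| ≤ |us| + Cu := by
        have h4 : u t = us + (u t - us) := by ring
        calc |u t| = |us + (u t - us)| := by rw [← h4]
          _ ≤ |us| + |u t - us| := abs_add_le _ _
          _ ≤ |us| + Cu := by linarith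
      have h6 : |1 - x t| ≤ 1 + M := by
        rw [abs_le]; constructor
        · nlinarith [hM t ht, hMpos]
        · nlinarith [hx_pos t ht]
      calc |1 - x t - u t| ≤ |1 - x t| + |u t| := abs_sub _ _
        _ ≤ (1 + M) + (|us| + Cu) := by linarith
        _ = 1 + M + |us| + Cu := by ring
    have hMx := hM t ht
    have hx0 := (hx_pos t ht).le
    rw [hD_def]
    nlinarith [abs_nonneg (1 - x t - u t), hMpos]
  -- the function w = (x - xs)² and its Lipschitz bound
  obtain ⟨Lip, hLip_def⟩ : ∃ c : ℝ, c = 2 * (M + xs) * D := ⟨_, rfl⟩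
  have hLippos : 0 < Lip := by rw [hLip_def]; positivity
  obtain ⟨w, hw_def⟩ : ∃ f : ℝ → ℝ, f = fun t => (x t - xs) ^ 2 := ⟨_, rfl⟩
  have hwt : ∀ t, w t = (x t - xs) ^ 2 := fun t => by rw [hw_def]
  have hwd : ∀ t ≥ (0 : ℝ), HasDerivAt w
      (2 * (x t - xs) * ((1 - x t) * x t - x t * u t)) t := by
    intro t ht
    have h := ((hx t ht).sub_const xs).pow 2
    rw [hw_def]
    refine h.congr_deriv ?_
    ring
  have hxabs : ∀ t ≥ (0 : ℝ), |x t - xs| ≤ M + xs := by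
    intro t ht
    rw [abs_le]; constructor
    · nlinarith [hx_pos t ht]
    · nlinarith [hM t ht]
  have hwb : ∀ t ≥ (0 : ℝ),
      |2 * (x t - xs) * ((1 - x t) * x t - x t * u t)| ≤ Lip := by
    intro t ht
    rw [abs_mul, abs_mul, abs_two, hLip_def]
    have h1 := hxabs t ht
    have h2 := hD t ht
    have h3 : (0:ℝ) ≤ 2 * |x t - xs| := by positivity
    nlinarith [abs_nonneg (x t - xs), abs_nonneg ((1 - x t) * x t - x t * u t)]
  have hwLip : ∀ s ∈ Ici (0:ℝ), ∀ t ∈ Ici (0:ℝ), |w s - w t| ≤ Lip * |s - t| := by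
    intro s hs t ht
    have := (convex_Ici (0:ℝ)).norm_image_sub_le_of_norm_hasDerivWithin_le
      (f := w) (f' := fun r => 2 * (x r - xs) * ((1 - x r) * x r - x r * u r))
      (fun r hr => (hwd r hr).hasDerivWithinAt)
      (fun r hr => by rw [Real.norm_eq_abs]; exact hwb r hr) ht hs
    simpa [Real.norm_eq_abs] using this
  -- V converges to its infimum L
  obtain ⟨g, hg_def⟩ : ∃ g : ℝ → ℝ, g = fun t => V (max t 0) := ⟨_, rfl⟩
  have hg_anti : Antitone g := by
    intro s t hst
    rw [hg_def]
    exact hV_anti (le_max_right s 0) (le_max_right t 0) (max_le_max hst le_rfl)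
  have hVlb : ∀ t ≥ (0:ℝ), K₁ * φ xs ≤ V t := by
    intro t ht
    rw [hVt]
    nlinarith [mul_le_mul_of_nonneg_left (hφmin (x t) (hx_pos t ht)) hK₁.le,
      sq_nonneg (u t - us)]
  have hg_bdd : BddBelow (Set.range g) := by
    refine ⟨K₁ * φ xs, ?_⟩
    rintro r ⟨t, rfl⟩
    rw [hg_def]
    exact hVlb _ (le_max_right t 0)
  obtain ⟨L, hL⟩ : ∃ L, Tendsto g atTop (nhds L) :=
    ⟨_, tendsto_atTop_ciInf hg_anti hg_bdd⟩
  have hVL : Tendsto V atTop (nhds L) := by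
    apply hL.congr'
    filter_upwards [eventually_ge_atTop (0:ℝ)] with t ht
    rw [hg_def]
    simp [max_eq_left ht]
  -- continuity facts
  have hxc : ContinuousOn x (Ici 0) :=
    fun t ht => (hx t ht).continuousAt.continuousWithinAt
  have hwc : ContinuousOn (fun s => K₁ * (x s - xs) ^ 2) (Ici 0) := by
    exact (continuousOn_const.mul (((hxc.sub continuousOn_const).pow 2)))
  -- fundamental theorem of calculus for V
  have hFTC : ∀ t₀ ≥ (0:ℝ), ∀ δ > (0:ℝ),
      V t₀ - V (t₀ + δ) = ∫ s in t₀..(t₀ + δ), K₁ * (x s - xs) ^ 2 := by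
    intro t₀ ht₀ δ hδ
    have hle : t₀ ≤ t₀ + δ := by linarith
    have hsub : uIcc t₀ (t₀ + δ) ⊆ Ici 0 := by
      rw [uIcc_of_le hle]
      exact fun s hs => le_trans ht₀ hs.1
    have hint : IntervalIntegrable (fun s => -(K₁ * (x s - xs) ^ 2))
        MeasureTheory.volume t₀ (t₀ + δ) :=
      ((hwc.mono hsub).neg).intervalIntegrable
    have h1 : ∀ s ∈ uIcc t₀ (t₀ + δ), HasDerivAt V (-(K₁ * (x s - xs) ^ 2)) s :=
      fun s hs => hVd s (hsub hs)
    have h2 := intervalIntegral.integral_eq_sub_of_hasDerivAt h1 hint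
    rw [intervalIntegral.integral_neg] at h2
    linarith
  -- convergence of x to xs (Barbalat)
  have hx_tendsto : Tendsto x atTop (nhds xs) := by
    rw [Metric.tendsto_atTop]
    intro ε hε
    obtain ⟨δ, hδ_def⟩ : ∃ d : ℝ, d = ε ^ 2 / (2 * Lip) := ⟨_, rfl⟩
    have hδ : 0 < δ := by rw [hδ_def]; positivity
    have hdiff : Tendsto (fun t => V t - V (t + δ)) atTop (nhds (L - L)) :=
      hVL.sub (hVL.comp (tendsto_atTop_add_const_right atTop δ tendsto_id))
    rw [sub_self] at hdiff
    have hpos : (0:ℝ) < K₁ * (ε ^ 2 / 2) * δ := by positivity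
    have hev : ∀ᶠ t in atTop, (V t - V (t + δ)) < K₁ * (ε ^ 2 / 2) * δ :=
      hdiff.eventually_lt_const hpos
    obtain ⟨N₀, hN₀⟩ := eventually_atTop.1 hev
    refine ⟨max N₀ 0, fun t ht => ?_⟩
    have ht0 : (0:ℝ) ≤ t := le_trans (le_max_right N₀ 0) ht
    rw [Real.dist_eq]
    by_contra hcon
    push_neg at hcon
    -- then w t ≥ ε² and w stays ≥ ε²/2 on [t, t+δ]
    have hwt_big : ε ^ 2 ≤ w t := by
      rw [hwt]
      nlinarith [abs_nonneg (x t - xs), sq_abs (x t - xs)]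
    have hwbig : ∀ s ∈ Icc t (t + δ), ε ^ 2 / 2 ≤ (x s - xs) ^ 2 := by
      intro s hs
      have hs0 : (0:ℝ) ≤ s := le_trans ht0 hs.1
      have h1 := hwLip s hs0 t ht0
      have h2 : |s - t| ≤ δ := by
        rw [abs_le]; constructor <;> [linarith [hs.1]; linarith [hs.2]]
      have h3 : Lip * |s - t| ≤ Lip * δ := mul_le_mul_of_nonneg_left h2 hLippos.le
      have h4 : Lip * δ = ε ^ 2 / 2 := by
        rw [hδ_def]; field_simp
      have h5 : w t - w s ≤ |w s - w t| := by
        rw [abs_sub_comm]; exact le_abs_self _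
      rw [← hwt s]
      linarith
    -- lower bound on the integral
    have hle : t ≤ t + δ := by linarith
    have hsub : uIcc t (t + δ) ⊆ Ici 0 := by
      rw [uIcc_of_le hle]
      exact fun s hs => le_trans ht0 hs.1
    have hint1 : IntervalIntegrable (fun s => K₁ * (x s - xs) ^ 2)
        MeasureTheory.volume t (t + δ) := (hwc.mono hsub).intervalIntegrable
    have hint2 : IntervalIntegrable (fun _ : ℝ => K₁ * (ε ^ 2 / 2))
        MeasureTheory.volume t (t + δ) := intervalIntegrable_const
    have hmono := intervalIntegral.integral_mono_on hle hint2 hint1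
      (fun s hs => mul_le_mul_of_nonneg_left (hwbig s hs) hK₁.le)
    rw [intervalIntegral.integral_const, smul_eq_mul] at hmono
    have hFTCt := hFTC t ht0 δ hδ
    have hNt := hN₀ t (le_trans (le_max_left N₀ 0) ht)
    have : K₁ * (ε ^ 2 / 2) * δ ≤ V t - V (t + δ) := by
      rw [hFTCt]
      calc K₁ * (ε ^ 2 / 2) * δ = (t + δ - t) * (K₁ * (ε ^ 2 / 2)) := by ring
        _ ≤ _ := hmono
    linarith
  -- convergence of the square (u - us)²
  have hφcont : Tendsto (fun t => φ (x t)) atTop (nhds (φ xs)) := by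
    have hc : ContinuousAt φ xs := by
      rw [hφ_def]
      exact continuousAt_id.sub (continuousAt_const.mul (Real.continuousAt_log hxs.ne'))
    exact hc.tendsto.comp hx_tendsto
  obtain ⟨l, hl_def⟩ : ∃ l : ℝ, l = 2 * L - 2 * (K₁ * φ xs) := ⟨_, rfl⟩
  have hu_sq : Tendsto (fun t => (u t - us) ^ 2) atTop (nhds l) := by
    have h1 : ∀ t, (u t - us) ^ 2 = 2 * V t - 2 * (K₁ * φ (x t)) := fun t => by
      rw [hVt]; ring
    have h2 := (hVL.const_mul 2).sub ((hφcont.const_mul K₁).const_mul 2)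
    rw [hl_def]
    exact h2.congr (fun t => (h1 t).symm)
  have hl_nn : 0 ≤ l := ge_of_tendsto' hu_sq (fun t => sq_nonneg _)
  -- the limit of the square must be zero
  have hl0 : l = 0 := by
    by_contra hne
    have hl : 0 < l := lt_of_le_of_ne hl_nn (Ne.symm hne)
    obtain ⟨c, hc_def⟩ : ∃ c : ℝ, c = Real.sqrt l := ⟨_, rfl⟩
    have hc : 0 < c := hc_def ▸ Real.sqrt_pos.2 hl
    have habs_t : Tendsto (fun t => |u t - us|) atTop (nhds c) := by
      have h := (Real.continuous_sqrt.continuousAt (x := l)).tendsto.comp hu_sq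
      rw [hc_def]
      simpa [Function.comp_def, Real.sqrt_sq_eq_abs] using h
    have hev1 : ∀ᶠ t in atTop, c / 2 < |u t - us| :=
      habs_t.eventually_const_lt (by linarith)
    have hev2 : ∀ᶠ t in atTop, |x t - xs| < c / 8 := by
      rw [Metric.tendsto_atTop] at hx_tendsto
      obtain ⟨N, hN⟩ := hx_tendsto (c / 8) (by linarith)
      exact eventually_atTop.2 ⟨N, fun t ht => by
        have := hN t ht; rwa [Real.dist_eq] at this⟩
    obtain ⟨T₀, hT₀⟩ := eventually_atTop.1 (hev1.and hev2)
    obtain ⟨T, hT_def⟩ : ∃ T : ℝ, T = max T₀ 0 := ⟨_, rfl⟩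
    have hT0 : (0:ℝ) ≤ T := hT_def ▸ le_max_right _ _
    have hT : ∀ t ≥ T, c / 2 < |u t - us| ∧ |x t - xs| < c / 8 :=
      fun t ht => hT₀ t (le_trans (hT_def ▸ le_max_left T₀ 0) ht)
    -- the sign of u - us is eventually constant
    have hsign : (∀ t ≥ T, c / 2 < u t - us) ∨ (∀ t ≥ T, u t - us < -(c / 2)) := by
      have hcont : ∀ t ≥ T, ContinuousOn (fun s => u s - us) (Icc T t) := by
        intro t _ s hs
        exact (((hu s (le_trans hT0 hs.1)).continuousAt).continuousWithinAt).sub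
          continuousWithinAt_const
      by_cases hpos : 0 < u T - us
      · left
        intro t ht
        by_contra hle
        push_neg at hle
        have h1 := (hT t ht).1
        have hneg : u t - us < 0 := by
          rcases abs_cases (u t - us) with ⟨he, _⟩ | ⟨he, _⟩
          · rw [he] at h1; linarith
          · rw [he] at h1; linarith
        obtain ⟨s, hs, hs0⟩ := intermediate_value_Icc' ht (hcont t ht)
          (⟨hneg.le, hpos.le⟩ : (0:ℝ) ∈ Icc (u t - us) (u T - us))
        have hs0' : u s - us = 0 := hs0
        have h2 := (hT s hs.1).1
        rw [hs0'] at h2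
        simp at h2
        linarith
      · right
        push_neg at hpos
        have hTneg : u T - us < 0 := by
          rcases lt_or_eq_of_le hpos with h | h
          · exact h
          · exfalso
            have h1 := (hT T le_rfl).1
            rw [h] at h1
            simp at h1
            linarith
        intro t ht
        by_contra hle
        push_neg at hle
        have h1 := (hT t ht).1
        have hposs : 0 < u t - us := by
          rcases abs_cases (u t - us) with ⟨he, _⟩ | ⟨he, _⟩
          · rw [he] at h1; linarith
          · rw [he] at h1; linarith
        obtain ⟨s, hs, hs0⟩ := intermediate_value_Icc ht (hcont t ht)
          (⟨hTneg.le, hposs.le⟩ : (0:ℝ) ∈ Icc (u T - us) (u t - us))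
        have hs0' : u s - us = 0 := hs0
        have h2 := (hT s hs.1).1
        rw [hs0'] at h2
        simp at h2
        linarith
    -- in both cases log (x t) escapes, a contradiction
    have hlogd : ∀ t ≥ T, HasDerivAt (fun s => Real.log (x s))
        ((xs - x t) - (u t - us)) t := by
      intro t ht
      have ht0 : (0:ℝ) ≤ t := le_trans hT0 ht
      have hxt := hx_pos t ht0
      have h := (Real.hasDerivAt_log hxt.ne').comp t (hx t ht0)
      refine h.congr_deriv ?_
      rw [hus_eq]
      field_simp
      ring
    rcases hsign with hsgn | hsgn
    · -- log x decreases linearly : contradiction with x ≥ m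
      have hanti : AntitoneOn (fun s => Real.log (x s) + (c / 4) * s) (Ici T) := by
        apply antitoneOn_of_hasDerivAt_nonpos
          (f' := fun t => ((xs - x t) - (u t - us)) + c / 4)
        · intro t ht
          have hid : HasDerivAt (fun s : ℝ => c / 4 * s) (c / 4) t := by
            simpa using (hasDerivAt_id t).const_mul (c / 4)
          exact (hlogd t ht).add hid
        · intro t ht
          have h1 := (hT t ht).2
          have h2 := hsgn t ht
          have h3 : xs - x t ≤ |x t - xs| := by
            rw [abs_sub_comm]; exact le_abs_self _
          linarith
      obtain ⟨t₁, ht₁_def⟩ : ∃ r : ℝ,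
          r = max T ((Real.log (x T) + (c/4) * T - Real.log m + 1) * (4 / c)) := ⟨_, rfl⟩
      have ht₁T : T ≤ t₁ := ht₁_def ▸ le_max_left _ _
      have h4 := hanti (self_mem_Ici) (mem_Ici.2 ht₁T) ht₁T
      simp only at h4
      have h5 : Real.log m ≤ Real.log (x t₁) :=
        Real.log_le_log hmpos (hm t₁ (le_trans hT0 ht₁T))
      have h6 : (Real.log (x T) + (c/4) * T - Real.log m + 1) * (4 / c) ≤ t₁ :=
        ht₁_def ▸ le_max_right _ _
      have h7 : Real.log (x T) + (c/4) * T - Real.log m + 1 ≤ (c/4) * t₁ := by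
        calc Real.log (x T) + (c/4) * T - Real.log m + 1
            = (Real.log (x T) + (c/4) * T - Real.log m + 1) * (4/c) * (c/4) := by
              field_simp
          _ ≤ t₁ * (c/4) := by nlinarith
          _ = (c/4) * t₁ := by ring
      linarith
    · -- log x increases linearly : contradiction with x ≤ M
      have hanti : AntitoneOn (fun s => -(Real.log (x s)) + (c / 4) * s) (Ici T) := by
        apply antitoneOn_of_hasDerivAt_nonpos
          (f' := fun t => -((xs - x t) - (u t - us)) + c / 4)
        · intro t ht
          have hid : HasDerivAt (fun s : ℝ => c / 4 * s) (c / 4) t := by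
            simpa using (hasDerivAt_id t).const_mul (c / 4)
          exact ((hlogd t ht).neg).add hid
        · intro t ht
          have h1 := (hT t ht).2
          have h2 := hsgn t ht
          have h3 : x t - xs ≤ |x t - xs| := le_abs_self _
          linarith
      obtain ⟨t₁, ht₁_def⟩ : ∃ r : ℝ,
          r = max T ((Real.log M - Real.log (x T) + (c/4) * T + 1) * (4 / c)) := ⟨_, rfl⟩
      have ht₁T : T ≤ t₁ := ht₁_def ▸ le_max_left _ _
      have h4 := hanti (self_mem_Ici) (mem_Ici.2 ht₁T) ht₁T
      simp only at h4
      have h5 : Real.log (x t₁) ≤ Real.log M := by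
        have ht₁0 : (0:ℝ) ≤ t₁ := le_trans hT0 ht₁T
        exact Real.log_le_log (hx_pos t₁ ht₁0) (hM t₁ ht₁0)
      have h6 : (Real.log M - Real.log (x T) + (c/4) * T + 1) * (4 / c) ≤ t₁ :=
        ht₁_def ▸ le_max_right _ _
      have h7 : Real.log M - Real.log (x T) + (c/4) * T + 1 ≤ (c/4) * t₁ := by
        calc Real.log M - Real.log (x T) + (c/4) * T + 1
            = (Real.log M - Real.log (x T) + (c/4) * T + 1) * (4/c) * (c/4) := by
              field_simp
          _ ≤ t₁ * (c/4) := by nlinarith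
          _ = (c/4) * t₁ := by ring
      linarith
  -- conclude convergence of u
  have hu_tendsto : Tendsto u atTop (nhds us) := by
    have h0 : Tendsto (fun t => |u t - us|) atTop (nhds 0) := by
      have h := (Real.continuous_sqrt.continuousAt (x := l)).tendsto.comp hu_sq
      rw [hl0] at h
      simpa [Function.comp_def, Real.sqrt_sq_eq_abs] using h
    have h1 : Tendsto (fun t => u t - us) atTop (nhds 0) :=
      (tendsto_zero_iff_abs_tendsto_zero _).2 h0
    have h2 := h1.add (tendsto_const_nhds (x := us))
    simpa using h2
  exact ⟨hx_tendsto, hu_tendsto, hxs⟩
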